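/- (Ordering of credibility factors in the dynamic Poisson-gamma model, arbitrary means.) Let T ≥ 2 be an integer, ρ ∈ [0,1), σ > 0, ψ > 0, and let λ_1,…,λ_T, λ_{T+1} > 0 be real numbers. Let Σ_T be the T×T matrix with [Σ_T]_{t,t} = ψλ_t + σ²λ_t² and [Σ_T]_{s,t} = σ²λ_sλ_t ρ^{|s−t|} for s ≠ t, and let c ∈ ℝ^T with c_t = σ²λ_tλ_{T+1}ρ^{T+1−t}. Then Σ_T is invertible and the credibility factors α̂ = Σ_T^{−1}c satisfy α̂_1 ≤ α̂_2 ≤ … ≤ α̂_T, with strict inequalities whenever ρ ∈ (0,1). -/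

import Mathlib

open Matrix Finset

/-- Covariance matrix of the observations in the AR(1) state-space model:
diagonal entries `q_t + σ²λ_t²`, off-diagonal entries `σ²λ_sλ_tρ^{|s−t|}`
(one-based sequences `lam`, `q`). -/
lemma psd_kernel (ρ : ℝ) (h0 : 0 ≤ ρ) (h1 : ρ ≤ 1) (y : ℕ → ℝ) (n : ℕ) :
    (∑ s ∈ range n, ρ ^ (n - 1 - s) * y s) ^ 2 ≤
      ∑ s ∈ range n, ∑ t ∈ range n, ρ ^ Int.natAbs ((s:ℤ) - (t:ℤ)) * (y s * y t) := by
  induction n with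
  | zero => simp
  | succ n ih =>
    have hw : ∑ s ∈ range (n+1), ρ ^ (n + 1 - 1 - s) * y s
        = ρ * (∑ s ∈ range n, ρ ^ (n - 1 - s) * y s) + y n := by
      rw [Finset.sum_range_succ, Finset.mul_sum]
      congr 1
      · apply Finset.sum_congr rfl; intro s hs; rw [mem_range] at hs
        have h2 : n + 1 - 1 - s = (n - 1 - s) + 1 := by omega
        rw [h2, pow_succ]; ring
      · simp
    have hc1 : ∑ s ∈ range n, ρ ^ Int.natAbs ((s:ℤ) - (n:ℤ)) * (y s * y n)
        = ρ * (∑ s ∈ range n, ρ ^ (n - 1 - s) * y s) * y n := by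
      rw [Finset.mul_sum, Finset.sum_mul]
      apply Finset.sum_congr rfl; intro s hs; rw [mem_range] at hs
      have h2 : Int.natAbs ((s:ℤ) - (n:ℤ)) = (n - 1 - s) + 1 := by omega
      rw [h2, pow_succ]; ring
    have hc2 : ∑ t ∈ range n, ρ ^ Int.natAbs ((n:ℤ) - (t:ℤ)) * (y n * y t)
        = ρ * (∑ s ∈ range n, ρ ^ (n - 1 - s) * y s) * y n := by
      rw [Finset.mul_sum, Finset.sum_mul]
      apply Finset.sum_congr rfl; intro s hs; rw [mem_range] at hs
      have h2 : Int.natAbs ((n:ℤ) - (s:ℤ)) = (n - 1 - s) + 1 := by omega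
      rw [h2, pow_succ]; ring
    have hsplit : ∑ s ∈ range (n+1), ∑ t ∈ range (n+1), ρ ^ Int.natAbs ((s:ℤ) - (t:ℤ)) * (y s * y t)
        = (∑ s ∈ range n, ∑ t ∈ range n, ρ ^ Int.natAbs ((s:ℤ) - (t:ℤ)) * (y s * y t))
          + (∑ s ∈ range n, ρ ^ Int.natAbs ((s:ℤ) - (n:ℤ)) * (y s * y n))
          + ((∑ t ∈ range n, ρ ^ Int.natAbs ((n:ℤ) - (t:ℤ)) * (y n * y t))
          + ρ ^ Int.natAbs ((n:ℤ) - (n:ℤ)) * (y n * y n)) := by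
      rw [Finset.sum_range_succ]
      congr 1
      · rw [← Finset.sum_add_distrib]
        apply Finset.sum_congr rfl; intro s _
        rw [Finset.sum_range_succ]
      · rw [Finset.sum_range_succ]
    rw [hw, hsplit, hc1, hc2]
    have h3 : Int.natAbs ((n:ℤ) - (n:ℤ)) = 0 := by omega
    rw [h3, pow_zero, one_mul]
    nlinarith [ih, sq_nonneg (∑ s ∈ range n, ρ ^ (n - 1 - s) * y s),
      mul_nonneg (by nlinarith : (0:ℝ) ≤ 1 - ρ^2) (sq_nonneg (∑ s ∈ range n, ρ ^ (n - 1 - s) * y s))]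

noncomputable def covMat (T : ℕ) (ρ σ : ℝ) (lam q : ℕ → ℝ) :
    Matrix (Fin T) (Fin T) ℝ :=
  Matrix.of fun s t =>
    if s = t then q ((s : ℕ) + 1) + σ ^ 2 * (lam ((s : ℕ) + 1)) ^ 2
    else σ ^ 2 * lam ((s : ℕ) + 1) * lam ((t : ℕ) + 1) *
      ρ ^ (Int.natAbs ((s : ℤ) - (t : ℤ)))

lemma covMat_entry (T : ℕ) (ρ σ ψ : ℝ) (lam : ℕ → ℝ) (s t : Fin T) :
    covMat T ρ σ lam (fun t => ψ * lam t) s t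
      = (if s = t then ψ * lam ((s:ℕ)+1) else 0)
        + σ^2 * (lam ((s:ℕ)+1) * lam ((t:ℕ)+1)) * ρ ^ Int.natAbs ((s:ℤ) - (t:ℤ)) := by
  by_cases h : s = t
  · subst h
    have h0 : Int.natAbs ((s:ℤ) - (s:ℤ)) = 0 := by omega
    simp only [covMat, Matrix.of_apply, ite_true, eq_self_iff_true, h0, pow_zero]
    ring
  · simp only [covMat, Matrix.of_apply, if_neg h]
    ring

lemma covMat_posDef (T : ℕ) (ρ σ ψ : ℝ) (hρ0 : 0 ≤ ρ) (hρ1 : ρ < 1)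
    (hσ : 0 < σ) (hψ : 0 < ψ) (lam : ℕ → ℝ)
    (hlam : ∀ t, 1 ≤ t → t ≤ T + 1 → 0 < lam t) :
    (covMat T ρ σ lam (fun t => ψ * lam t)).PosDef := by
  have hlam' : ∀ s : Fin T, 0 < lam ((s:ℕ)+1) := fun s =>
    hlam _ (by omega) (by have := s.isLt; omega)
  rw [Matrix.posDef_iff_dotProduct_mulVec]
  constructor
  · ext i j
    rw [Matrix.conjTranspose_apply, star_trivial, covMat_entry, covMat_entry]
    have hn : Int.natAbs ((j:ℤ) - (i:ℤ)) = Int.natAbs ((i:ℤ) - (j:ℤ)) := by omega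
    by_cases h : i = j
    · subst h; ring
    · rw [if_neg (fun hh => h hh.symm), if_neg h, hn]; ring
  · intro x hx
    have hsx : star x = x := by funext i; exact star_trivial _
    rw [hsx]
    set y : ℕ → ℝ := fun n => if h : n < T then x ⟨n, h⟩ else 0 with hy
    have hxy : ∀ i : Fin T, x i = y (i:ℕ) := by
      intro i; rw [hy]; simp [i.isLt]
    set z : ℕ → ℝ := fun n => lam (n+1) * y n with hz
    have expand : x ⬝ᵥ (covMat T ρ σ lam (fun t => ψ * lam t)) *ᵥ x
        = (∑ s ∈ range T, ψ * (lam (s+1) * (y s * y s)))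
          + σ^2 * (∑ s ∈ range T, ∑ t ∈ range T,
              ρ ^ Int.natAbs ((s:ℤ) - (t:ℤ)) * (z s * z t)) := by
      have step1 : x ⬝ᵥ (covMat T ρ σ lam (fun t => ψ * lam t)) *ᵥ x
          = ∑ i : Fin T, ∑ j : Fin T, x i * (covMat T ρ σ lam (fun t => ψ * lam t) i j * x j) := by
        simp [dotProduct, Matrix.mulVec, Finset.mul_sum]
      rw [step1]
      have step2 : ∀ i : Fin T, ∀ j : Fin T,
          x i * (covMat T ρ σ lam (fun t => ψ * lam t) i j * x j)
            = (if i = j then ψ * (lam ((i:ℕ)+1) * (y (i:ℕ) * y (i:ℕ))) else 0)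
              + σ^2 * (ρ ^ Int.natAbs (((i:ℕ):ℤ) - ((j:ℕ):ℤ)) * (z (i:ℕ) * z (j:ℕ))) := by
        intro i j
        rw [covMat_entry, hxy i, hxy j, hz]
        by_cases h : i = j
        · subst h; rw [if_pos rfl, if_pos rfl]; ring
        · rw [if_neg h, if_neg h]; ring
      rw [Finset.sum_congr rfl (fun i _ => Finset.sum_congr rfl (fun j _ => step2 i j))]
      have step3 : ∑ i : Fin T, ∑ j : Fin T,
          ((if i = j then ψ * (lam ((i:ℕ)+1) * (y (i:ℕ) * y (i:ℕ))) else 0)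
            + σ^2 * (ρ ^ Int.natAbs (((i:ℕ):ℤ) - ((j:ℕ):ℤ)) * (z (i:ℕ) * z (j:ℕ))))
          = (∑ i : Fin T, ∑ j : Fin T, (if i = j then ψ * (lam ((i:ℕ)+1) * (y (i:ℕ) * y (i:ℕ))) else 0))
            + ∑ i : Fin T, ∑ j : Fin T, σ^2 * (ρ ^ Int.natAbs (((i:ℕ):ℤ) - ((j:ℕ):ℤ)) * (z (i:ℕ) * z (j:ℕ))) := by
        rw [← Finset.sum_add_distrib]
        exact Finset.sum_congr rfl (fun i _ => by rw [← Finset.sum_add_distrib])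
      rw [step3]
      congr 1
      · have : ∀ i : Fin T, (∑ j : Fin T, (if i = j then ψ * (lam ((i:ℕ)+1) * (y (i:ℕ) * y (i:ℕ))) else 0))
            = ψ * (lam ((i:ℕ)+1) * (y (i:ℕ) * y (i:ℕ))) := by
          intro i; simp
        rw [Finset.sum_congr rfl (fun i _ => this i)]
        exact Fin.sum_univ_eq_sum_range (fun n => ψ * (lam (n+1) * (y n * y n))) T
      · have pull : (∑ i : Fin T, ∑ j : Fin T, σ^2 * (ρ ^ Int.natAbs (((i:ℕ):ℤ) - ((j:ℕ):ℤ)) * (z (i:ℕ) * z (j:ℕ))))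
            = σ^2 * ∑ i : Fin T, ∑ j : Fin T, ρ ^ Int.natAbs (((i:ℕ):ℤ) - ((j:ℕ):ℤ)) * (z (i:ℕ) * z (j:ℕ)) := by
          rw [Finset.mul_sum]
          exact Finset.sum_congr rfl fun i _ => (Finset.mul_sum _ _ _).symm
        rw [pull]
        congr 1
        have inner : ∀ i : Fin T, (∑ j : Fin T, ρ ^ Int.natAbs (((i:ℕ):ℤ) - ((j:ℕ):ℤ)) * (z (i:ℕ) * z (j:ℕ)))
            = ∑ t ∈ range T, ρ ^ Int.natAbs (((i:ℕ):ℤ) - (t:ℤ)) * (z (i:ℕ) * z t) := fun i =>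
          Fin.sum_univ_eq_sum_range (fun t => ρ ^ Int.natAbs (((i:ℕ):ℤ) - (t:ℤ)) * (z (i:ℕ) * z t)) T
        rw [Finset.sum_congr rfl (fun i _ => inner i)]
        exact Fin.sum_univ_eq_sum_range
          (fun s => ∑ t ∈ range T, ρ ^ Int.natAbs ((s:ℤ) - (t:ℤ)) * (z s * z t)) T
    rw [expand]
    have hQ : 0 ≤ ∑ s ∈ range T, ∑ t ∈ range T, ρ ^ Int.natAbs ((s:ℤ) - (t:ℤ)) * (z s * z t) :=
      le_trans (sq_nonneg _) (psd_kernel ρ hρ0 hρ1.le z T)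
    have hfirst : 0 < ∑ s ∈ range T, ψ * (lam (s+1) * (y s * y s)) := by
      obtain ⟨i, hi⟩ := Function.ne_iff.mp hx
      apply Finset.sum_pos'
      · intro s hs
        rw [mem_range] at hs
        have := hlam (s+1) (by omega) (by omega)
        have := mul_self_nonneg (y s)
        positivity
      · refine ⟨(i:ℕ), Finset.mem_range.mpr i.isLt, ?_⟩
        have hyi : y (i:ℕ) ≠ 0 := by rw [← hxy]; simpa using hi
        have h1 := hlam ((i:ℕ)+1) (by omega) (by have := i.isLt; omega)
        have h2 : 0 < y (i:ℕ) * y (i:ℕ) := mul_self_pos.mpr hyi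
        positivity
    nlinarith [mul_nonneg (sq_nonneg σ) hQ]

noncomputable def Ssum (ρ : ℝ) (lam a : ℕ → ℝ) (t : ℕ) : ℝ :=
  ∑ s ∈ range (t+1), lam (s+1) * ρ ^ (t - s) * a s

noncomputable def Usum (T : ℕ) (ρ : ℝ) (lam a : ℕ → ℝ) (t : ℕ) : ℝ :=
  ∑ s ∈ Finset.Ico t T, lam (s+1) * ρ ^ (s - t) * a s


lemma sign_mono (T : ℕ) (hT : 2 ≤ T) (ρ σ ψ : ℝ) (hρ0 : 0 < ρ) (hρ1 : ρ < 1)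
    (hσ : 0 < σ) (hψ : 0 < ψ) (lam a : ℕ → ℝ)
    (hlam : ∀ t, 1 ≤ t → t ≤ T + 1 → 0 < lam t)
    (hbase : (ψ + σ^2*(1-ρ^2) * lam 1) * a 0 = ρ * ψ * a 1)
    (hrec : ∀ t, t + 2 < T →
      ρ * ψ * a (t+2) = (ψ*(1+ρ^2) + σ^2*(1-ρ^2) * lam (t+2)) * a (t+1) - ρ * ψ * a t)
    (hbound : (ψ + σ^2*(1-ρ^2) * lam T) * a (T-1)
      = σ^2*(1-ρ^2) * lam (T+1) * ρ + ρ * ψ * a (T-2)) :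
    ∀ k, k + 1 < T → 0 < a k ∧ a k < a (k+1) := by
  have hc0 : 0 < σ^2*(1-ρ^2) := mul_pos (pow_pos hσ 2) (by nlinarith)
  have hlam1 : 0 < lam 1 := hlam 1 (by omega) (by omega)
  have hD : 0 < ψ + σ^2*(1-ρ^2) * lam 1 := by
    linarith [mul_pos hc0 hlam1]
  have hE : 0 < ψ - ρ*ψ + σ^2*(1-ρ^2) * lam 1 := by
    linarith [mul_pos hc0 hlam1, mul_pos hψ (show (0:ℝ) < 1-ρ by linarith)]
  have hρψ : 0 < ρ * ψ := mul_pos hρ0 hψ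
  have hlT : 0 < lam T := hlam T (by omega) (by omega)
  have hlT1 : 0 < lam (T+1) := hlam (T+1) (by omega) (by omega)
  have hpos1 : 0 < a 1 := by
    by_contra hcon
    push_neg at hcon
    have down : ∀ k, k + 1 < T → a (k+1) ≤ 0 ∧ a (k+1) ≤ a k := by
      intro k
      induction k with
      | zero =>
        intro h
        refine ⟨hcon, ?_⟩
        have key : (ψ + σ^2*(1-ρ^2)*lam 1) * (a 0 - a 1)
            = (ψ - ρ*ψ + σ^2*(1-ρ^2)*lam 1) * (-(a 1)) := by linear_combination hbase
        by_contra hc2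
        push_neg at hc2
        have k1 : (ψ + σ^2*(1-ρ^2)*lam 1) * (a 0 - a 1) < 0 :=
          mul_neg_of_pos_of_neg hD (by linarith)
        have k2 : 0 ≤ (ψ - ρ*ψ + σ^2*(1-ρ^2)*lam 1) * (-(a 1)) :=
          mul_nonneg hE.le (by linarith)
        linarith [key]
      | succ k ih =>
        intro h
        obtain ⟨ih1, ih2⟩ := ih (by omega)
        have e := hrec k (by omega)
        have hlk : 0 < lam (k+2) := hlam _ (by omega) (by omega)
        have h5 : (ψ*(1+ρ^2) + σ^2*(1-ρ^2) * lam (k+2) - 2*ρ*ψ) * a (k+1) ≤ 0 :=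
          mul_nonpos_of_nonneg_of_nonpos
            (by linarith [mul_pos hc0 hlk, mul_nonneg hψ.le (sq_nonneg (1-ρ))]) ih1
        have h8 : 0 ≤ ρ * ψ * (a k - a (k+1)) := mul_nonneg hρψ.le (by linarith)
        have h6 : ρ * ψ * a (k+2) ≤ ρ * ψ * a (k+1) := by nlinarith [e, h5, h8]
        have h7 : a (k+2) ≤ a (k+1) := le_of_mul_le_mul_left h6 hρψ
        exact ⟨le_trans h7 ih1, h7⟩
    obtain ⟨d1, d2⟩ := down (T-2) (by omega)
    have h1 : T - 2 + 1 = T - 1 := by omega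
    rw [h1] at d1 d2
    have h8 : ρ * ψ * a (T-1) ≤ ρ * ψ * a (T-2) := mul_le_mul_of_nonneg_left d2 hρψ.le
    have h10 : (ψ - ρ*ψ + σ^2*(1-ρ^2)*lam T) * a (T-1) ≤ 0 :=
      mul_nonpos_of_nonneg_of_nonpos
        (by linarith [mul_pos hc0 hlT, mul_pos hψ (show (0:ℝ) < 1-ρ by linarith)]) d1
    have h11 : 0 < σ^2*(1-ρ^2) * lam (T+1) * ρ := mul_pos (mul_pos hc0 hlT1) hρ0
    nlinarith [hbound, h8, h10, h11]
  have hpos0 : 0 < a 0 ∧ a 0 < a 1 := by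
    constructor
    · by_contra hc2
      push_neg at hc2
      have k1 : (ψ + σ^2*(1-ρ^2)*lam 1) * a 0 ≤ 0 := mul_nonpos_of_nonneg_of_nonpos hD.le hc2
      have k2 : 0 < ρ * ψ * a 1 := mul_pos hρψ hpos1
      linarith [hbase]
    · have key2 : (ψ + σ^2*(1-ρ^2)*lam 1) * (a 1 - a 0)
          = (ψ - ρ*ψ + σ^2*(1-ρ^2)*lam 1) * a 1 := by linear_combination -hbase
      by_contra hc2
      push_neg at hc2
      have k1 : (ψ + σ^2*(1-ρ^2)*lam 1) * (a 1 - a 0) ≤ 0 :=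
        mul_nonpos_of_nonneg_of_nonpos hD.le (by linarith)
      have k2 : 0 < (ψ - ρ*ψ + σ^2*(1-ρ^2)*lam 1) * a 1 := mul_pos hE hpos1
      linarith [key2]
  intro k
  induction k with
  | zero => intro _; exact ⟨hpos0.1, hpos0.2⟩
  | succ k ih =>
    intro h
    obtain ⟨ih1, ih2⟩ := ih (by omega)
    have hk1 : 0 < a (k+1) := lt_trans ih1 ih2
    have e := hrec k (by omega)
    have hlk : 0 < lam (k+2) := hlam _ (by omega) (by omega)
    have hm : 0 < ψ*(1+ρ^2) + σ^2*(1-ρ^2) * lam (k+2) - 2*ρ*ψ := by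
      linarith [mul_pos hc0 hlk, mul_nonneg hψ.le (sq_nonneg (1-ρ))]
    have hρψ : 0 < ρ * ψ := mul_pos hρ0 hψ
    have p1 : 0 < (ψ*(1+ρ^2) + σ^2*(1-ρ^2) * lam (k+2) - 2*ρ*ψ) * a (k+1) := mul_pos hm hk1
    have p2 : 0 < ρ * ψ * (a (k+1) - a k) := mul_pos hρψ (by linarith)
    have h6 : ρ * ψ * a (k+1) < ρ * ψ * a (k+2) := by nlinarith [e, p1, p2]
    exact ⟨hk1, lt_of_mul_lt_mul_left h6 hρψ.le⟩

lemma main_mono (T : ℕ) (hT : 2 ≤ T) (ρ σ ψ : ℝ) (hρ0 : 0 < ρ) (hρ1 : ρ < 1)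
    (hσ : 0 < σ) (hψ : 0 < ψ) (lam a : ℕ → ℝ)
    (hlam : ∀ t, 1 ≤ t → t ≤ T + 1 → 0 < lam t)
    (heq : ∀ t, t < T →
      ψ * a t + σ^2 * (∑ s ∈ range T, lam (s+1) * ρ ^ Int.natAbs ((t:ℤ) - (s:ℤ)) * a s)
        = σ^2 * lam (T+1) * ρ ^ (T - t)) :
    ∀ k, k + 1 < T → 0 < a k ∧ a k < a (k+1) := by
  set S : ℕ → ℝ := Ssum ρ lam a with hSdef
  set U : ℕ → ℝ := Usum T ρ lam a with hUdef
  have hsplit : ∀ t, t < T →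
      (∑ s ∈ range T, lam (s+1) * ρ ^ Int.natAbs ((t:ℤ) - (s:ℤ)) * a s) = S t + ρ * U (t+1) := by
    intro t ht
    rw [hSdef, hUdef, Ssum, Usum, range_eq_Ico,
      ← Finset.sum_Ico_consecutive _ (Nat.zero_le (t+1)) (by omega : t+1 ≤ T)]
    congr 1
    · rw [← range_eq_Ico]
      apply Finset.sum_congr rfl; intro s hs; rw [mem_range] at hs
      have h2 : Int.natAbs ((t:ℤ) - (s:ℤ)) = t - s := by omega
      rw [h2]
    · rw [Finset.mul_sum]
      apply Finset.sum_congr rfl; intro s hs; rw [Finset.mem_Ico] at hs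
      have h2 : Int.natAbs ((t:ℤ) - (s:ℤ)) = (s - (t+1)) + 1 := by omega
      rw [h2, pow_succ]; ring
  have hSrec : ∀ t, S (t+1) = ρ * S t + lam (t+2) * a (t+1) := by
    intro t
    rw [hSdef, Ssum, Ssum, Finset.sum_range_succ]
    congr 1
    · rw [Finset.mul_sum]
      apply Finset.sum_congr rfl; intro s hs; rw [mem_range] at hs
      have h2 : t + 1 - s = (t - s) + 1 := by omega
      rw [h2, pow_succ]; ring
    · simp
  have hUrec : ∀ t, t < T → U t = lam (t+1) * a t + ρ * U (t+1) := by
    intro t ht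
    rw [hUdef, Usum, Usum, Finset.sum_eq_sum_Ico_succ_bot ht]
    congr 1
    · simp
    · rw [Finset.mul_sum]
      apply Finset.sum_congr rfl; intro s hs; rw [Finset.mem_Ico] at hs
      have h2 : s - t = (s - (t+1)) + 1 := by omega
      rw [h2, pow_succ]; ring
  have hUend : U T = 0 := by
    rw [hUdef, Usum]; simp
  have hF : ∀ t, t < T → ψ * a t + σ^2 * (S t + ρ * U (t+1)) = σ^2 * lam (T+1) * ρ ^ (T - t) := by
    intro t ht; rw [← hsplit t ht]; exact heq t ht
  have hstar : ∀ t, t + 1 < T → ψ * a t - ρ * ψ * a (t+1) + σ^2*(1-ρ^2) * S t = 0 := by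
    intro t ht
    have e1 := hF t (by omega)
    have e2 := hF (t+1) ht
    have e3 := hSrec t
    have e4 := hUrec (t+1) ht
    have hp : ρ^(T-t) = ρ * ρ^(T-(t+1)) := by rw [← pow_succ']; congr 1; omega
    rw [hp] at e1
    linear_combination e1 - ρ * e2 + σ^2 * ρ * e3 - σ^2 * ρ * e4
  have hS0 : S 0 = lam 1 * a 0 := by rw [hSdef, Ssum]; simp
  have hbase : (ψ + σ^2*(1-ρ^2) * lam 1) * a 0 = ρ * ψ * a 1 := by
    have e := hstar 0 (by omega)
    rw [hS0] at e
    linear_combination e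
  have hrec : ∀ t, t + 2 < T →
      ρ * ψ * a (t+2) = (ψ*(1+ρ^2) + σ^2*(1-ρ^2) * lam (t+2)) * a (t+1) - ρ * ψ * a t := by
    intro t ht
    have e1 := hstar t (by omega)
    have e2 := hstar (t+1) (by omega)
    have e3 := hSrec t
    linear_combination ρ * e1 - e2 + σ^2*(1-ρ^2) * e3
  have hbound : (ψ + σ^2*(1-ρ^2) * lam T) * a (T-1)
      = σ^2*(1-ρ^2) * lam (T+1) * ρ + ρ * ψ * a (T-2) := by
    have e1 := hF (T-1) (by omega)
    have e2 := hstar (T-2) (by omega)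
    have e3 := hSrec (T-2)
    have h1 : T - 2 + 1 = T - 1 := by omega
    have h2 : T - 1 + 1 = T := by omega
    have h3 : T - (T-1) = 1 := by omega
    have h4 : T - 2 + 2 = T := by omega
    rw [h2, h3, hUend, pow_one] at e1
    rw [h1] at e2
    rw [h1, h4] at e3
    linear_combination (1-ρ^2) * e1 - ρ * e2 - σ^2*(1-ρ^2) * e3
  exact sign_mono T hT ρ σ ψ hρ0 hρ1 hσ hψ lam a hlam hbase hrec hbound

lemma chain_mono (T : ℕ) (a : ℕ → ℝ) (H : ∀ k, k + 1 < T → 0 < a k ∧ a k < a (k+1)) :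
    ∀ i j, i < j → j < T → a i < a j := by
  intro i j hij hjT
  induction j with
  | zero => omega
  | succ n ih =>
    rcases Nat.lt_succ_iff_lt_or_eq.mp hij with h | h
    · exact lt_trans (ih h (by omega)) (H n (by omega)).2
    · subst h; exact (H i (by omega)).2

/-- ordering of credibility factors in the dynamic Poisson-gamma
model with arbitrary means.  Here `q_t = ψλ_t`, `c_t = σ²λ_tλ_{T+1}ρ^{T+1−t}`;
the covariance matrix is invertible and the credibility factors `α̂ = Σ_T⁻¹c`
satisfy `α̂_1 ≤ … ≤ α̂_T`, with strict inequalities when `ρ ∈ (0,1)`. -/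
theorem stmt12 (T : ℕ) (hT : 2 ≤ T) (ρ : ℝ) (hρ1 : 0 ≤ ρ) (hρ2 : ρ < 1)
    (σ ψ : ℝ) (hσ : 0 < σ) (hψ : 0 < ψ) (lam : ℕ → ℝ)
    (hlam : ∀ t, 1 ≤ t → t ≤ T + 1 → 0 < lam t) :
    IsUnit (covMat T ρ σ lam (fun t => ψ * lam t)) ∧
    (∀ s t : Fin T, s ≤ t →
      (covMat T ρ σ lam (fun t => ψ * lam t))⁻¹.mulVec
          (fun i : Fin T =>
            σ ^ 2 * lam ((i : ℕ) + 1) * lam (T + 1) * ρ ^ (T - (i : ℕ))) s ≤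
        (covMat T ρ σ lam (fun t => ψ * lam t))⁻¹.mulVec
          (fun i : Fin T =>
            σ ^ 2 * lam ((i : ℕ) + 1) * lam (T + 1) * ρ ^ (T - (i : ℕ))) t) ∧
    (0 < ρ → ∀ s t : Fin T, s < t →
      (covMat T ρ σ lam (fun t => ψ * lam t))⁻¹.mulVec
          (fun i : Fin T =>
            σ ^ 2 * lam ((i : ℕ) + 1) * lam (T + 1) * ρ ^ (T - (i : ℕ))) s <
        (covMat T ρ σ lam (fun t => ψ * lam t))⁻¹.mulVec
          (fun i : Fin T =>
            σ ^ 2 * lam ((i : ℕ) + 1) * lam (T + 1) * ρ ^ (T - (i : ℕ))) t) := by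

  have hPD := covMat_posDef T ρ σ ψ hρ1 hρ2 hσ hψ lam hlam
  have hUnit : IsUnit (covMat T ρ σ lam (fun t => ψ * lam t)) := hPD.isUnit
  refine ⟨hUnit, ?_⟩
  rcases eq_or_lt_of_le hρ1 with hρz | hρpos
  · -- ρ = 0 : the credibility vector is zero
    have hcz : (fun i : Fin T =>
        σ ^ 2 * lam ((i : ℕ) + 1) * lam (T + 1) * ρ ^ (T - (i : ℕ))) = 0 := by
      funext i
      have h1 : ρ ^ (T - (i:ℕ)) = 0 := by
        rw [← hρz]
        exact zero_pow (by have := i.isLt; omega)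
      simp [h1]
    rw [hcz, Matrix.mulVec_zero]
    refine ⟨fun s t _ => le_refl _, fun h => absurd (hρz ▸ h) (lt_irrefl ρ)⟩
  · -- ρ > 0 : strict monotonicity
    set α : Fin T → ℝ := (covMat T ρ σ lam (fun t => ψ * lam t))⁻¹.mulVec
      (fun i : Fin T => σ ^ 2 * lam ((i : ℕ) + 1) * lam (T + 1) * ρ ^ (T - (i : ℕ))) with hα
    set a : ℕ → ℝ := fun n => if h : n < T then α ⟨n, h⟩ else 0 with ha
    have haα : ∀ i : Fin T, α i = a (i:ℕ) := by
      intro i; rw [ha]; simp [i.isLt]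
    have hsolve : (covMat T ρ σ lam (fun t => ψ * lam t)) *ᵥ α
        = (fun i : Fin T => σ ^ 2 * lam ((i : ℕ) + 1) * lam (T + 1) * ρ ^ (T - (i : ℕ))) := by
      rw [hα, Matrix.mulVec_mulVec,
        Matrix.mul_nonsing_inv _ ((Matrix.isUnit_iff_isUnit_det _).mp hUnit), Matrix.one_mulVec]
    have heq : ∀ t, t < T →
        ψ * a t + σ^2 * (∑ s ∈ range T, lam (s+1) * ρ ^ Int.natAbs ((t:ℤ) - (s:ℤ)) * a s)
          = σ^2 * lam (T+1) * ρ ^ (T - t) := by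
      intro t ht
      have row := congrFun hsolve ⟨t, ht⟩
      have hrow : ∑ j : Fin T, covMat T ρ σ lam (fun t => ψ * lam t) ⟨t, ht⟩ j * α j
          = σ ^ 2 * lam (t + 1) * lam (T + 1) * ρ ^ (T - t) := row
      have expand : ∑ j : Fin T, covMat T ρ σ lam (fun t => ψ * lam t) ⟨t, ht⟩ j * α j
          = ψ * lam (t+1) * a t
            + σ^2 * lam (t+1) * (∑ s ∈ range T, lam (s+1) * ρ ^ Int.natAbs ((t:ℤ) - (s:ℤ)) * a s) := by
        have per : ∀ j : Fin T,
            covMat T ρ σ lam (fun t => ψ * lam t) ⟨t, ht⟩ j * α j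
              = (if (⟨t, ht⟩ : Fin T) = j then ψ * lam (t+1) * a t else 0)
                + σ^2 * lam (t+1) * (lam ((j:ℕ)+1) * ρ ^ Int.natAbs ((t:ℤ) - ((j:ℕ):ℤ)) * a (j:ℕ)) := by
          intro j
          rw [covMat_entry, haα j, show ((⟨t, ht⟩ : Fin T) : ℕ) = t from rfl]
          by_cases h : (⟨t, ht⟩ : Fin T) = j
          · have hjt : (j:ℕ) = t := by rw [← h]
            rw [if_pos h, if_pos h, hjt]; ring
          · rw [if_neg h, if_neg h]; ring
        rw [Finset.sum_congr rfl (fun j _ => per j), Finset.sum_add_distrib]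
        congr 1
        · simp
        · rw [← Finset.mul_sum]
          congr 1
          exact Fin.sum_univ_eq_sum_range
            (fun s => lam (s+1) * ρ ^ Int.natAbs ((t:ℤ) - (s:ℤ)) * a s) T
      rw [expand] at hrow
      have hlt : lam (t+1) ≠ 0 := ne_of_gt (hlam (t+1) (by omega) (by omega))
      apply mul_left_cancel₀ hlt
      linear_combination hrow
    have H := main_mono T hT ρ σ ψ hρpos hρ2 hσ hψ lam a hlam heq
    have hchain := chain_mono T a H
    constructor
    · intro s t hst
      rcases eq_or_lt_of_le hst with h | h
      · rw [h]
      · rw [haα s, haα t]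
        exact (hchain (s:ℕ) (t:ℕ) h t.isLt).le
    · intro _ s t hst
      rw [haα s, haα t]
      exact hchain (s:ℕ) (t:ℕ) hst t.isLt
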